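/- For every simple graph G of order n, the corona G ∘ K_2 satisfies th_-(G ∘ K_2) ≤ n + 1. -/
import Mathlib


open SimpleGraph

/-- One round of skew zero forcing: every vertex (blue or white) with exactly one
white neighbor colors that neighbor blue. -/
def skewStep {V : Type*} (G : SimpleGraph V) (B : Set V) : Set V :=
  B ∪ {w | ∃ v, G.Adj v w ∧ ∀ u, G.Adj v u → u ∉ B → u = w}

/-- The set of blue vertices after `n` rounds of skew zero forcing starting from `S`. -/
def skewIter {V : Type*} (G : SimpleGraph V) (S : Set V) : ℕ → Set V
  | 0 => S
  | n + 1 => skewStep G (skewIter G S n)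

/-- `S` is a skew zero forcing set of `G`. -/
def IsSkewZFS {V : Type*} (G : SimpleGraph V) (S : Set V) : Prop :=
  ∃ n, skewIter G S n = Set.univ

/-- The skew propagation time `pt₋(G;S)`: the number of rounds needed for all
vertices to become blue. -/
noncomputable def skewPt {V : Type*} (G : SimpleGraph V) (S : Set V) : ℕ :=
  sInf {n | skewIter G S n = Set.univ}

/-- The skew throttling number `th₋(G)`. -/
noncomputable def skewTh {V : Type*} (G : SimpleGraph V) : ℕ :=
  sInf {m | ∃ S : Set V, IsSkewZFS G S ∧ m = S.ncard + skewPt G S}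

/-- The skew throttling number over sets of size `k`, `th₋(G,k)`. -/
noncomputable def skewThK {V : Type*} (G : SimpleGraph V) (k : ℕ) : ℕ :=
  sInf {m | ∃ S : Set V, IsSkewZFS G S ∧ S.ncard = k ∧ m = S.ncard + skewPt G S}

/-- The skew zero forcing number `Z₋(G)`. -/
noncomputable def skewZ {V : Type*} (G : SimpleGraph V) : ℕ :=
  sInf {m | ∃ S : Set V, IsSkewZFS G S ∧ m = S.ncard}

/-- The skew propagation time `pt₋(G)`: minimum propagation time over minimum
skew zero forcing sets. -/
noncomputable def skewPtMin {V : Type*} (G : SimpleGraph V) : ℕ :=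
  sInf {m | ∃ S : Set V, IsSkewZFS G S ∧ S.ncard = skewZ G ∧ m = skewPt G S}

/-- `rK₂`: the disjoint union of `r` copies of `K₂`. -/
def rK2 (r : ℕ) : SimpleGraph (Fin r × Fin 2) :=
  SimpleGraph.fromRel (fun a b => a.1 = b.1)

/-- Disjoint union of two simple graphs. -/
def disjUnion {α β : Type*} (G : SimpleGraph α) (H : SimpleGraph β) :
    SimpleGraph (α ⊕ β) :=
  SimpleGraph.fromRel (fun x y =>
    match x, y with
    | Sum.inl a, Sum.inl b => G.Adj a b
    | Sum.inr a, Sum.inr b => H.Adj a b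
    | _, _ => False)

/-- The corona `G ∘ K₁`: attach a pendant leaf to every vertex of `G`. -/
def coronaK1 {α : Type*} (G : SimpleGraph α) : SimpleGraph (α ⊕ α) :=
  SimpleGraph.fromRel (fun x y =>
    match x, y with
    | Sum.inl a, Sum.inl b => G.Adj a b
    | Sum.inl a, Sum.inr b => a = b
    | _, _ => False)

/-- The corona `G ∘ K₂`: attach a private copy of `K₂` (a triangle) to every
vertex of `G`. -/
def coronaK2 {α : Type*} (G : SimpleGraph α) : SimpleGraph (α ⊕ α × Fin 2) :=
  SimpleGraph.fromRel (fun x y =>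
    match x, y with
    | Sum.inl a, Sum.inl b => G.Adj a b
    | Sum.inl a, Sum.inr b => a = b.1
    | Sum.inr a, Sum.inr b => a.1 = b.1
    | _, _ => False)

/-- The graph `H(s,t)` with hub `b`, pendant paths `b xᵢ yᵢ` and triangles `b zᵢ wᵢ`. -/
def Hgraph (s t : ℕ) : SimpleGraph (Unit ⊕ ((Fin s × Fin 2) ⊕ (Fin t × Fin 2))) :=
  SimpleGraph.fromRel (fun x y =>
    match x, y with
    | Sum.inl _, Sum.inr (Sum.inl p) => p.2 = 0
    | Sum.inl _, Sum.inr (Sum.inr _) => True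
    | Sum.inr (Sum.inl p), Sum.inr (Sum.inl q) => p.1 = q.1
    | Sum.inr (Sum.inr p), Sum.inr (Sum.inr q) => p.1 = q.1
    | _, _ => False)

/-- The friendship graph `Fₙ`: a universal vertex joined to `n` disjoint copies of `K₂`. -/
def friendshipGraph (n : ℕ) : SimpleGraph (Unit ⊕ (Fin n × Fin 2)) :=
  SimpleGraph.fromRel (fun x y =>
    match x, y with
    | Sum.inl _, Sum.inr _ => True
    | Sum.inr p, Sum.inr q => p.1 = q.1
    | _, _ => False)

/-- The balanced spider `T_{p,ℓ}`: a center with `p` legs of `ℓ` vertices each. -/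
def spider (p ℓ : ℕ) : SimpleGraph (Unit ⊕ (Fin p × Fin ℓ)) :=
  SimpleGraph.fromRel (fun x y =>
    match x, y with
    | Sum.inl _, Sum.inr q => q.2.val = 0
    | Sum.inr q, Sum.inr q' => q.1 = q'.1 ∧ q'.2.val = q.2.val + 1
    | _, _ => False)

/-- The hypercube graph `Qₙ`: binary strings of length `n`, adjacent iff they
differ in exactly one coordinate. -/
def hypercube (n : ℕ) : SimpleGraph (Fin n → Bool) :=
  SimpleGraph.fromRel (fun x y => ∃! i, x i ≠ y i)
/-- `th₋(G ∘ K₂) ≤ n + 1` for every graph `G` of order `n`. -/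
theorem skewTh_coronaK2_le {V : Type*} [Fintype V] (G : SimpleGraph V) :
    skewTh (coronaK2 G) ≤ Fintype.card V + 1 := by
  classical
  set S : Set (V ⊕ V × Fin 2) := Set.range Sum.inl with hSdef
  have key : skewIter (coronaK2 G) S 1 = Set.univ := by
    ext x
    simp only [skewIter, skewStep, Set.mem_union, Set.mem_setOf_eq, Set.mem_univ, iff_true]
    cases x with
    | inl a => exact Or.inl ⟨a, rfl⟩
    | inr p =>
      right
      refine ⟨Sum.inr (p.1, p.2 + 1), ?_, ?_⟩
      · rw [coronaK2, SimpleGraph.fromRel_adj]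
        constructor
        · intro h
          have : p.2 + 1 = p.2 := by
            have := (Sum.inr.inj h)
            exact congrArg Prod.snd this
          have hv : (p.2 + 1).val = p.2.val := congrArg Fin.val this
          have h1 : (p.2 + 1).val = (p.2.val + 1) % 2 := by
            simp [Fin.add_def]
          have h2 : p.2.val < 2 := p.2.isLt
          omega
        · left; rfl
      · intro u hu hu'
        cases u with
        | inl b => exact absurd ⟨b, rfl⟩ hu'
        | inr q =>
          rw [coronaK2, SimpleGraph.fromRel_adj] at hu
          obtain ⟨hne, h⟩ := hu
          have hq1 : q.1 = p.1 := by
            rcases h with h | h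
            · exact h.symm
            · exact h
          have hq2 : q.2 = p.2 := by
            have hne' : q.2 ≠ p.2 + 1 := by
              intro he
              apply hne
              congr 1
              exact Prod.ext hq1.symm he.symm
            have h1 : (p.2 + 1).val = (p.2.val + 1) % 2 := by
              simp [Fin.add_def]
            have h2 : p.2.val < 2 := p.2.isLt
            have h3 : q.2.val < 2 := q.2.isLt
            have h4 : q.2.val ≠ (p.2 + 1).val := fun he => hne' (Fin.ext he)
            apply Fin.ext
            omega
          congr 1
          exact Prod.ext hq1 hq2
  have hZFS : IsSkewZFS (coronaK2 G) S := ⟨1, key⟩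
  have hpt : skewPt (coronaK2 G) S ≤ 1 := Nat.sInf_le key
  have hcard : S.ncard = Fintype.card V := by
    rw [hSdef, ← Set.image_univ, Set.ncard_image_of_injective _ Sum.inl_injective,
      Set.ncard_univ, Nat.card_eq_fintype_card]
  calc skewTh (coronaK2 G) ≤ S.ncard + skewPt (coronaK2 G) S :=
        Nat.sInf_le ⟨S, hZFS, rfl⟩
    _ ≤ Fintype.card V + 1 := by rw [hcard]; omega
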